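/- Let Θ be a nonempty finite set, θ* ∈ Θ, and let m ≥ 1, n ≥ 1 be integers, φ ≥ 0, c ≥ 1. Let π : Θ → ℝ>0 be a prior with π(θ₁)/π(θ₂) ≤ c for all θ₁, θ₂ ∈ Θ. Let g₀, g₁, …, g_m : Θ → ℝ≥0 be likelihood functions with g_i(θ*) > 0 for every i. Let w : Θ → ℝ≥0 (the joint weight of the ICL prompt with each task) satisfy w(θ) ≤ e^{nmφ} π(θ) Π_{i=0}^{m} g_i(θ) for every θ ∈ Θ, and w(θ*) ≥ e^{−nmφ} π(θ*) Π_{i=0}^{m} g_i(θ*) > 0. Then Σ_{θ ≠ θ*} w(θ) / w(θ*) ≤ e^{2nmφ} c^m Π_{i=0}^{m} [ ( Σ_{θ ≠ θ*} π(θ) g_i(θ) ) / ( π(θ*) g_i(θ*) ) ]. Equivalently, writing A_i := Σ_{θ ≠ θ*} π(θ)g_i(θ) / Σ_{θ} π(θ)g_i(θ) for the ambiguity of the i-th component at θ*, the posterior odds against θ* under the full prompt are at most e^{2nmφ} c^m Π_{i=0}^{m} A_i / (1 − A_i). -/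

import Mathlib

open Finset

lemma aux_sum_prod_le {ι κ : Type*} [DecidableEq ι] (s : Finset ι) (a : ι) (ha : a ∈ s)
    (E : Finset κ) (f : ι → κ → ℝ) (hf : ∀ i k, k ∈ E → 0 ≤ f i k) :
    ∑ k ∈ E, ∏ i ∈ s, f i k ≤ ∏ i ∈ s, ∑ k ∈ E, f i k := by
  rw [← Finset.mul_prod_erase s _ ha]
  calc ∑ k ∈ E, ∏ i ∈ s, f i k
      = ∑ k ∈ E, f a k * ∏ i ∈ s.erase a, f i k :=
        Finset.sum_congr rfl fun k _ => (Finset.mul_prod_erase s (f · k) ha).symm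
    _ ≤ ∑ k ∈ E, f a k * ∏ i ∈ s.erase a, (∑ j ∈ E, f i j) := by
        refine Finset.sum_le_sum fun k hk => ?_
        refine mul_le_mul_of_nonneg_left ?_ (hf a k hk)
        exact Finset.prod_le_prod (fun i _ => hf i k hk)
          (fun i _ => Finset.single_le_sum (fun j hj => hf i j hj) hk)
    _ = _ := by rw [← Finset.sum_mul]

/-- Posterior-odds bound for In-Context Learning: under a `c`-balanced
prior, nearly-Markov distortion `e^{±nmφ}`, and componentwise likelihoods `g₀, …, g_m`,
the posterior odds against the true task `θ*` under the full ICL prompt are bounded by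
`e^{2nmφ} c^m` times the product of the componentwise odds against `θ*`. -/
theorem icl_posterior_odds_bound {Θ : Type*} [Fintype Θ] [DecidableEq Θ] (θs : Θ)
    (m n : ℕ) (hm : 1 ≤ m) (hn : 1 ≤ n) (φ c : ℝ) (hφ : 0 ≤ φ) (hc : 1 ≤ c)
    (π : Θ → ℝ) (hπ : ∀ θ, 0 < π θ) (hratio : ∀ θ₁ θ₂, π θ₁ / π θ₂ ≤ c)
    (g : Fin (m + 1) → Θ → ℝ) (hg0 : ∀ i θ, 0 ≤ g i θ) (hgs : ∀ i, 0 < g i θs)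
    (w : Θ → ℝ) (hw0 : ∀ θ, 0 ≤ w θ)
    (hwub : ∀ θ, w θ ≤ Real.exp ((n : ℝ) * m * φ) * π θ * ∏ i, g i θ)
    (hwlb : Real.exp (-((n : ℝ) * m * φ)) * π θs * ∏ i, g i θs ≤ w θs)
    (hws : 0 < w θs) :
    (∑ θ ∈ univ.erase θs, w θ) / w θs ≤
      Real.exp (2 * (n : ℝ) * m * φ) * c ^ m *
        ∏ i, (∑ θ ∈ univ.erase θs, π θ * g i θ) / (π θs * g i θs) := by
  set E := univ.erase θs with hE
  set e := Real.exp ((n : ℝ) * m * φ) with he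
  have hepos : 0 < e := Real.exp_pos _
  have hcpos : (0 : ℝ) < c := lt_of_lt_of_le one_pos hc
  have hπs := hπ θs
  -- S i : componentwise sums
  set S : Fin (m + 1) → ℝ := fun i => ∑ θ ∈ E, π θ * g i θ with hS
  have hSnn : ∀ i, 0 ≤ S i := fun i =>
    Finset.sum_nonneg fun θ _ => mul_nonneg (hπ θ).le (hg0 i θ)
  -- step 2 per θ
  have hstep2 : ∑ θ ∈ E, π θ * ∏ i, g i θ ≤ (c / π θs) ^ m * ∏ i, S i := by
    have h1 : ∑ θ ∈ E, π θ * ∏ i, g i θ ≤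
        (c / π θs) ^ m * ∑ θ ∈ E, ∏ i, (π θ * g i θ) := by
      rw [Finset.mul_sum]
      refine Finset.sum_le_sum fun θ _ => ?_
      have hprod : ∏ i, (π θ * g i θ) = π θ ^ (m + 1) * ∏ i, g i θ := by
        rw [Finset.prod_mul_distrib, Finset.prod_const, Finset.card_univ, Fintype.card_fin]
      have hinv : 1 / π θ ≤ c / π θs := by
        rw [div_le_div_iff₀ (hπ θ) hπs, one_mul]
        calc π θs = (π θs / π θ) * π θ := (div_mul_cancel₀ _ (hπ θ).ne').symm
          _ ≤ c * π θ := mul_le_mul_of_nonneg_right (hratio θs θ) (hπ θ).le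
      have hg : 0 ≤ ∏ i, g i θ := Finset.prod_nonneg fun i _ => hg0 i θ
      have hinvm : (1 / π θ) ^ m ≤ (c / π θs) ^ m :=
        pow_le_pow_left₀ (one_div_nonneg.mpr (hπ θ).le) hinv m
      calc π θ * ∏ i, g i θ
          = (1 / π θ) ^ m * ∏ i, (π θ * g i θ) := by
            have hne : (π θ) ^ m ≠ 0 := pow_ne_zero m (hπ θ).ne'
            rw [hprod, one_div, inv_pow, pow_succ]
            field_simp
        _ ≤ (c / π θs) ^ m * ∏ i, (π θ * g i θ) := by
            exact mul_le_mul_of_nonneg_right hinvm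
              (Finset.prod_nonneg fun i _ => mul_nonneg (hπ θ).le (hg0 i θ))
    refine h1.trans ?_
    refine mul_le_mul_of_nonneg_left ?_ (by positivity)
    exact aux_sum_prod_le univ 0 (Finset.mem_univ 0) E (fun i θ => π θ * g i θ)
      (fun i θ _ => mul_nonneg (hπ θ).le (hg0 i θ))
  -- step 1
  have hstep1 : ∑ θ ∈ E, w θ ≤ e * ∑ θ ∈ E, π θ * ∏ i, g i θ := by
    rw [Finset.mul_sum]
    refine Finset.sum_le_sum fun θ _ => ?_
    calc w θ ≤ e * π θ * ∏ i, g i θ := hwub θ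
      _ = e * (π θ * ∏ i, g i θ) := by ring
  have hnum : ∑ θ ∈ E, w θ ≤ e * ((c / π θs) ^ m * ∏ i, S i) :=
    hstep1.trans (mul_le_mul_of_nonneg_left hstep2 hepos.le)
  have hgprod : 0 < ∏ i, g i θs := Finset.prod_pos fun i _ => hgs i
  have hDpos : 0 < e⁻¹ * π θs * ∏ i, g i θs := by positivity
  have hwlb' : e⁻¹ * π θs * ∏ i, g i θs ≤ w θs := by
    rw [he, ← Real.exp_neg]; exact hwlb
  have hmain : (∑ θ ∈ E, w θ) / w θs ≤
      (e * ((c / π θs) ^ m * ∏ i, S i)) / (e⁻¹ * π θs * ∏ i, g i θs) :=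
    div_le_div₀ (mul_nonneg hepos.le (mul_nonneg
      (pow_nonneg (div_nonneg hcpos.le hπs.le) m) (Finset.prod_nonneg fun i _ => hSnn i)))
      hnum hDpos hwlb'
  refine hmain.trans_eq ?_
  have hRHS : ∏ i, S i / (π θs * g i θs) = (∏ i, S i) / (π θs ^ (m + 1) * ∏ i, g i θs) := by
    rw [Finset.prod_div_distrib, Finset.prod_mul_distrib, Finset.prod_const,
      Finset.card_univ, Fintype.card_fin]
  rw [hRHS]
  have hee : Real.exp (2 * (n : ℝ) * m * φ) = e * e := by
    rw [he, ← Real.exp_add]; ring_nf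
  rw [hee]
  field_simp
  have hpm : π θs ^ m * (π θs)⁻¹ ^ m = 1 := by
    rw [← mul_pow, mul_inv_cancel₀ hπs.ne', one_pow]
  linear_combination (c ^ m * π θs * ∏ i, S i) * hpm
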